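/- Let q : A → B be a surjective *-homomorphism of C*-algebras, let n ∈ ℕ, and let b₁, …, bₙ ∈ B satisfy ‖∑_{i=1}^n bᵢ* bᵢ‖ < 1. Then there exist a₁, …, aₙ ∈ A with q(aᵢ) = bᵢ for all i and ‖∑_{i=1}^n aᵢ* aᵢ‖ < 1. -/

import Mathlib

open scoped CStarAlgebra

/-- **Column lifting** (used in the proof of Proposition 3.2 of Magajna, "Pointwise
approximation by elementary complete contractions"): if `q : A → B` is a surjective
*-homomorphism of C*-algebras and `b₁, …, bₙ ∈ B` satisfy `‖∑ bᵢ* bᵢ‖ < 1`, then there are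
lifts `aᵢ ∈ A` of the `bᵢ` with `‖∑ aᵢ* aᵢ‖ < 1`. -/
theorem exists_lift_column_norm_lt_one
    {A B : Type*} [NonUnitalCStarAlgebra A] [NonUnitalCStarAlgebra B]
    (q : A →⋆ₙₐ[ℂ] B) (hq : Function.Surjective q) (n : ℕ) (b : Fin n → B)
    (hb : ‖∑ i, star (b i) * b i‖ < 1) :
    ∃ a : Fin n → A, (∀ i, q (a i) = b i) ∧ ‖∑ i, star (a i) * a i‖ < 1 := by
  set y : B := ∑ i, star (b i) * b i with hy
  have hysa : IsSelfAdjoint y := by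
    simp only [hy, IsSelfAdjoint, star_sum, star_mul, star_star]
  set r : ℝ := (1 + ‖y‖) / 2 with hrdef
  have hy0 : 0 ≤ ‖y‖ := norm_nonneg y
  have hr0 : 0 < r := by positivity
  have hyr : ‖y‖ < r := by rw [hrdef]; linarith
  have hr1 : r < 1 := by rw [hrdef]; linarith
  have hmax : ∀ t : ℝ, 0 < max r t := fun t => lt_of_lt_of_le hr0 (le_max_left _ _)
  set k : ℝ → ℝ := fun t => 1 - Real.sqrt (r / max r t) with hkdef
  have hkc : Continuous k := by
    refine continuous_const.sub ?_
    exact (continuous_const.div (continuous_const.max continuous_id) fun t => (hmax t).ne').sqrt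
  have hkr : ∀ t : ℝ, t ≤ r → k t = 0 := by
    intro t ht
    simp [hkdef, max_eq_left ht, div_self hr0.ne']
  have hk0 : k 0 = 0 := hkr 0 hr0.le
  choose c hc using fun i => hq (b i)
  set x : A := ∑ i, star (c i) * c i with hx
  have hxsa : IsSelfAdjoint x := by
    simp only [hx, IsSelfAdjoint, star_sum, star_mul, star_star]
  have hqsp : ∀ t ∈ quasispectrum ℝ x, 0 ≤ t := by
    intro t ht
    rw [Unitization.quasispectrum_eq_spectrum_inr' ℝ ℂ x] at ht
    refine spectrum_nonneg_of_nonneg ?_ ht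
    have hxu : (x : Unitization ℂ A)
        = ∑ i, star ((c i : Unitization ℂ A)) * (c i : Unitization ℂ A) := by
      rw [hx]
      calc ((∑ i, star (c i) * c i : A) : Unitization ℂ A)
          = Unitization.inrNonUnitalStarAlgHom ℂ A (∑ i, star (c i) * c i) := rfl
        _ = ∑ i, star ((c i : Unitization ℂ A)) * (c i : Unitization ℂ A) := by
            rw [map_sum]; simp [map_mul, map_star]
    rw [hxu]
    exact Finset.sum_nonneg fun i _ => star_mul_self_nonneg _
  have hqx : q x = y := by simp [hx, hy, map_sum, map_mul, map_star, hc]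
  set m : A := cfcₙ k x with hm
  have hmsa : IsSelfAdjoint m := cfcₙ_predicate k x
  have hqxsa : IsSelfAdjoint (q x) := hqx ▸ hysa
  have hqm : q m = 0 := by
    have h1 : q m = cfcₙ k (q x) :=
      NonUnitalStarAlgHom.map_cfcₙ q k x hkc.continuousOn hk0 (map_continuous q) hxsa hqxsa
    rw [h1, hqx]
    have hspec : ∀ t ∈ quasispectrum ℝ y, t ≤ r := by
      intro t ht
      have h2 : ‖(id t : ℝ)‖ ≤ ‖cfcₙ (id : ℝ → ℝ) y‖ :=
        norm_apply_le_norm_cfcₙ id y ht continuous_id.continuousOn rfl hysa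
      rw [cfcₙ_id ℝ y] at h2
      calc t ≤ |t| := le_abs_self t
        _ ≤ ‖y‖ := h2
        _ ≤ r := hyr.le
    calc cfcₙ k y = cfcₙ (fun _ : ℝ => (0 : ℝ)) y :=
          cfcₙ_congr fun t ht => hkr t (hspec t ht)
      _ = 0 := cfcₙ_const_zero ℝ y
  refine ⟨fun i => c i - c i * m, fun i => ?_, ?_⟩
  · simp [map_sub, map_mul, hc, hqm]
  -- the sum identity
  have hsum : ∑ i, star (c i - c i * m) * (c i - c i * m)
      = x - x * m - m * x + m * (x * m) := by
    have hterm : ∀ i, star (c i - c i * m) * (c i - c i * m)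
        = star (c i) * c i - (star (c i) * c i) * m - m * (star (c i) * c i)
          + m * ((star (c i) * c i) * m) := by
      intro i
      simp only [star_sub, star_mul, hmsa.star_eq]
      noncomm_ring
    rw [Finset.sum_congr rfl fun i _ => hterm i]
    simp only [Finset.sum_add_distrib, Finset.sum_sub_distrib, ← Finset.sum_mul,
      ← Finset.mul_sum, ← hx]
  rw [hsum]
  -- rewrite as functional calculus of a single function
  have hidc : ContinuousOn (fun t : ℝ => t) (quasispectrum ℝ x) := continuous_id.continuousOn
  have hkon : ContinuousOn k (quasispectrum ℝ x) := hkc.continuousOn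
  have e1 : x * m = cfcₙ (fun t : ℝ => t * k t) x := by
    rw [cfcₙ_mul _ _ x hidc rfl hkon hk0, cfcₙ_id' ℝ x]
  have e2 : m * x = cfcₙ (fun t : ℝ => k t * t) x := by
    rw [cfcₙ_mul _ _ x hkon hk0 hidc rfl, cfcₙ_id' ℝ x]
  have e3 : m * (x * m) = cfcₙ (fun t : ℝ => k t * (t * k t)) x := by
    rw [cfcₙ_mul k (fun t : ℝ => t * k t) x hkon hk0 ((continuous_id'.mul hkc).continuousOn) (by simp), ← e1]
  have e4 : x - x * m - m * x + m * (x * m)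
      = cfcₙ (fun t : ℝ => (t - t * k t - k t * t) + k t * (t * k t)) x := by
    rw [cfcₙ_add (fun t : ℝ => t - t * k t - k t * t) (fun t : ℝ => k t * (t * k t)) x
        (((continuous_id'.sub (continuous_id'.mul hkc)).sub (hkc.mul continuous_id')).continuousOn)
        (by simp [hk0]) ((hkc.mul (continuous_id'.mul hkc)).continuousOn) (by simp [hk0]),
      cfcₙ_sub (fun t : ℝ => t - t * k t) (fun t : ℝ => k t * t) x ((continuous_id'.sub (continuous_id'.mul hkc)).continuousOn)
        (by simp [hk0]) ((hkc.mul continuous_id').continuousOn) (by simp [hk0]),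
      cfcₙ_sub (fun t : ℝ => t) (fun t : ℝ => t * k t) x hidc rfl ((continuous_id'.mul hkc).continuousOn) (by simp [hk0]),
      cfcₙ_id' ℝ x, ← e1, ← e2, ← e3]
  rw [e4]
  -- norm estimate
  refine norm_cfcₙ_lt fun t ht => ?_
  have ht0 : 0 ≤ t := hqsp t ht
  have hsq : (1 - k t) ^ 2 = r / max r t := by
    rw [hkdef]
    simp only [sub_sub_cancel]
    exact Real.sq_sqrt (div_nonneg hr0.le (hmax t).le)
  have hval : (t - t * k t - k t * t) + k t * (t * k t) = t * (r / max r t) := by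
    rw [← hsq]; ring
  rw [hval]
  have hnn : 0 ≤ t * (r / max r t) := mul_nonneg ht0 (div_nonneg hr0.le (hmax t).le)
  have hle : t * (r / max r t) ≤ r := by
    calc t * (r / max r t) ≤ max r t * (r / max r t) :=
          mul_le_mul_of_nonneg_right (le_max_right _ _) (div_nonneg hr0.le (hmax t).le)
      _ = r := by rw [mul_comm, div_mul_cancel₀ r (hmax t).ne']
  calc ‖t * (r / max r t)‖ = t * (r / max r t) := Real.norm_of_nonneg hnn
    _ ≤ r := hle
    _ < 1 := hr1
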